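/- Let n ≥ 1 and consider the polynomial ring ℂ[x_{ij} : 1 ≤ i ≤ j ≤ n] of polynomial functions on 𝔟. A polynomial f in this ring satisfies f(u₁ · X · u₂⁻¹) = f(X) for all u₁, u₂ ∈ U and all X ∈ 𝔟 if and only if f lies in the ℂ-subalgebra ℂ[x₁₁, x₂₂, …, xₙₙ] generated by the diagonal coordinate functions. In particular, the invariant algebra of this two-sided unipotent action on 𝔟 is isomorphic as a ℂ-algebra to a polynomial ring in n variables. -/

import Mathlib

/-- `UT n X` : `X` is an `n × n` upper triangular complex matrix (an element of 𝔟). -/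
def UT (n : ℕ) (X : Matrix (Fin n) (Fin n) ℂ) : Prop :=
  ∀ i j : Fin n, (j : ℕ) < (i : ℕ) → X i j = 0

/-- `Unip n u` : `u` is a unipotent upper triangular matrix (an element of `U`). -/
def Unip (n : ℕ) (u : Matrix (Fin n) (Fin n) ℂ) : Prop :=
  UT n u ∧ ∀ i : Fin n, u i i = 1

/-- Index set of the coordinates `x_{i,j}` (`i ≤ j`) of an upper triangular matrix. -/
abbrev UIdx (n : ℕ) := {p : Fin n × Fin n // p.1 ≤ p.2}

/-- The invariant subalgebra of `ℂ[x_{ij} : i ≤ j]` for the two-sided unipotent action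
`(u₁, u₂) • X = u₁ · X · u₂⁻¹` on 𝔟 (the filtered representation space of the `A₁`-Dynkin
quiver with dimension vector `(n, n)`). -/
noncomputable def invSubA1 (n : ℕ) : Subalgebra ℂ (MvPolynomial (UIdx n) ℂ) where
  carrier := { f | ∀ u₁ u₂ X : Matrix (Fin n) (Fin n) ℂ,
      Unip n u₁ → Unip n u₂ → UT n X →
      MvPolynomial.eval (fun s => (u₁ * X * u₂⁻¹) s.1.1 s.1.2) f =
      MvPolynomial.eval (fun s => X s.1.1 s.1.2) f }
  mul_mem' := by
    intro f g hf hg u₁ u₂ X hu₁ hu₂ hX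
    simp only [Set.mem_setOf_eq, map_mul] at *
    rw [hf u₁ u₂ X hu₁ hu₂ hX, hg u₁ u₂ X hu₁ hu₂ hX]
  one_mem' := by intro u₁ u₂ X hu₁ hu₂ hX; simp
  add_mem' := by
    intro f g hf hg u₁ u₂ X hu₁ hu₂ hX
    simp only [Set.mem_setOf_eq, map_add] at *
    rw [hf u₁ u₂ X hu₁ hu₂ hX, hg u₁ u₂ X hu₁ hu₂ hX]
  zero_mem' := by intro u₁ u₂ X hu₁ hu₂ hX; simp
  algebraMap_mem' := by
    intro c u₁ u₂ X hu₁ hu₂ hX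
    simp [MvPolynomial.algebraMap_eq]

/-- **Proposition 3.1.** A polynomial `f ∈ ℂ[x_{ij} : 1 ≤ i ≤ j ≤ n]` satisfies
`f(u₁ X u₂⁻¹) = f(X)` for all unipotent `u₁, u₂` and all upper triangular `X` if and only
if `f` lies in the ℂ-subalgebra generated by the diagonal coordinates `x₁₁, …, xₙₙ`; in
particular, the invariant algebra is isomorphic as a ℂ-algebra to a polynomial ring in `n`
variables. -/
lemma UT.bt {n : ℕ} {X : Matrix (Fin n) (Fin n) ℂ} (h : UT n X) :
    X.BlockTriangular id := fun i j hij => h i j hij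

lemma bt_diag_mul {n : ℕ} {A B : Matrix (Fin n) (Fin n) ℂ}
    (hA : A.BlockTriangular id) (hB : B.BlockTriangular id) (i : Fin n) :
    (A * B) i i = A i i * B i i := by
  rw [Matrix.mul_apply]
  refine Finset.sum_eq_single i (fun k _ hk => ?_) (by simp)
  rcases lt_or_gt_of_ne hk with h | h
  · rw [hA h, zero_mul]
  · rw [hB h, mul_zero]

lemma Unip.det_one {n : ℕ} {u : Matrix (Fin n) (Fin n) ℂ} (h : Unip n u) :
    u.det = 1 := by
  rw [Matrix.det_of_upperTriangular h.1.bt]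
  simp [h.2]

lemma Unip.inv {n : ℕ} {u : Matrix (Fin n) (Fin n) ℂ} (h : Unip n u) :
    Unip n u⁻¹ := by
  have hd : IsUnit u.det := by rw [h.det_one]; exact isUnit_one
  haveI : Invertible u := u.invertibleOfIsUnitDet hd
  have hbt : u⁻¹.BlockTriangular id := Matrix.blockTriangular_inv_of_blockTriangular h.1.bt
  refine ⟨fun i j hij => hbt hij, fun i => ?_⟩
  have := bt_diag_mul h.1.bt hbt i
  rw [Matrix.mul_nonsing_inv u hd] at this
  simpa [h.2 i] using this.symm

lemma key_diag {n : ℕ} {u₁ u₂ X : Matrix (Fin n) (Fin n) ℂ}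
    (h1 : Unip n u₁) (h2 : Unip n u₂) (hX : UT n X) (i : Fin n) :
    (u₁ * X * u₂⁻¹) i i = X i i := by
  have h2' := h2.inv
  have h12 : (u₁ * X).BlockTriangular id := h1.1.bt.mul hX.bt
  rw [bt_diag_mul h12 h2'.1.bt, bt_diag_mul h1.1.bt hX.bt, h1.2 i, h2'.2 i]
  ring

lemma unip_one {n : ℕ} : Unip n (1 : Matrix (Fin n) (Fin n) ℂ) :=
  ⟨fun i j hij => Matrix.one_apply_ne (by omega : i ≠ j), fun i => Matrix.one_apply_eq i⟩

/-- the substitution killing off-diagonal variables -/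
noncomputable def dsub (n : ℕ) : UIdx n → MvPolynomial (UIdx n) ℂ :=
  fun s => if s.1.1 = s.1.2 then MvPolynomial.X ⟨(s.1.1, s.1.1), le_rfl⟩ else 0

theorem main_iff (n : ℕ) (f : MvPolynomial (UIdx n) ℂ) :
    (∀ u₁ u₂ X : Matrix (Fin n) (Fin n) ℂ,
        Unip n u₁ → Unip n u₂ → UT n X →
        MvPolynomial.eval (fun s => (u₁ * X * u₂⁻¹) s.1.1 s.1.2) f =
        MvPolynomial.eval (fun s => X s.1.1 s.1.2) f) ↔
      f ∈ Algebra.adjoin ℂ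
        {p : MvPolynomial (UIdx n) ℂ | ∃ i : Fin n, p = MvPolynomial.X ⟨(i, i), le_rfl⟩} := by
  constructor
  · intro hf
    -- Step 1: f = aeval (dsub n) f
    have key : f = MvPolynomial.aeval (dsub n) f := by
      have hz : (f - MvPolynomial.aeval (dsub n) f) *
          (∏ i : Fin n, MvPolynomial.X (⟨(i, i), le_rfl⟩ : UIdx n)) = 0 := by
        apply MvPolynomial.funext
        intro v
        simp only [map_mul, map_sub, map_prod, MvPolynomial.eval_X, map_zero]
        by_cases hv : ∀ i : Fin n, v ⟨(i, i), le_rfl⟩ ≠ 0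
        · -- generic case : all diagonal values nonzero
          set Xm : Matrix (Fin n) (Fin n) ℂ :=
            Matrix.of (fun i j => if h : i ≤ j then v ⟨(i, j), h⟩ else 0) with hXm
          have hUT : UT n Xm := by
            intro i j hij
            exact dif_neg (not_le.2 (Fin.lt_def.mpr hij))
          set d : Fin n → ℂ := fun i => v ⟨(i, i), le_rfl⟩ with hd
          have hXd : ∀ i, Xm i i = d i := fun i => dif_pos le_rfl
          set u₂ : Matrix (Fin n) (Fin n) ℂ := Matrix.of (fun i j => (d i)⁻¹ * Xm i j) with hu₂
          have hu₂unip : Unip n u₂ := by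
            constructor
            · intro i j hij
              show (d i)⁻¹ * Xm i j = 0
              rw [hUT i j hij, mul_zero]
            · intro i
              show (d i)⁻¹ * Xm i i = 1
              rw [hXd i]; exact inv_mul_cancel₀ (hv i)
          have hDu : Matrix.diagonal d * u₂ = Xm := by
            ext i j
            rw [Matrix.diagonal_mul]
            show d i * ((d i)⁻¹ * Xm i j) = Xm i j
            rw [mul_inv_cancel_left₀ (hv i)]
          have hXinv : Xm * u₂⁻¹ = Matrix.diagonal d := by
            have hdet : IsUnit u₂.det := by rw [hu₂unip.det_one]; exact isUnit_one
            calc Xm * u₂⁻¹ = Matrix.diagonal d * u₂ * u₂⁻¹ := by rw [hDu]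
              _ = Matrix.diagonal d * (u₂ * u₂⁻¹) := by rw [Matrix.mul_assoc]
              _ = Matrix.diagonal d := by rw [Matrix.mul_nonsing_inv u₂ hdet, Matrix.mul_one]
          have hinv := hf 1 u₂ Xm unip_one hu₂unip hUT
          rw [Matrix.one_mul, hXinv] at hinv
          have efun : (fun s : UIdx n => Xm s.1.1 s.1.2) = v := by
            funext s
            show (if h : s.1.1 ≤ s.1.2 then v ⟨(s.1.1, s.1.2), h⟩ else 0) = v s
            rw [dif_pos s.2]
          have e1 : MvPolynomial.eval (fun s : UIdx n => Xm s.1.1 s.1.2) f =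
              MvPolynomial.eval v f := by rw [efun]
          have e2 : MvPolynomial.eval (fun s : UIdx n => Matrix.diagonal d s.1.1 s.1.2) f =
              MvPolynomial.eval v (MvPolynomial.aeval (dsub n) f) := by
            have hfun : (fun s : UIdx n => Matrix.diagonal d s.1.1 s.1.2) =
                fun s => MvPolynomial.eval v (dsub n s) := by
              funext s
              simp only [dsub, Matrix.diagonal_apply]
              split_ifs with h
              · rw [MvPolynomial.eval_X]
              · simp
            calc MvPolynomial.eval (fun s : UIdx n => Matrix.diagonal d s.1.1 s.1.2) f
                = MvPolynomial.eval (fun s => MvPolynomial.eval v (dsub n s)) f := by rw [hfun]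
              _ = MvPolynomial.aeval (fun s => MvPolynomial.aeval v (dsub n s)) f := rfl
              _ = MvPolynomial.aeval v (MvPolynomial.aeval (dsub n) f) :=
                  (MvPolynomial.comp_aeval_apply (f := dsub n) (MvPolynomial.aeval v) f).symm
              _ = MvPolynomial.eval v (MvPolynomial.aeval (dsub n) f) := rfl
          rw [e1, e2] at hinv
          rw [hinv, sub_self, zero_mul]
        · push_neg at hv
          obtain ⟨i, hi⟩ := hv
          rw [Finset.prod_eq_zero (Finset.mem_univ i) hi, mul_zero]
      have hq : (∏ i : Fin n, MvPolynomial.X (⟨(i, i), le_rfl⟩ : UIdx n)) ≠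
          (0 : MvPolynomial (UIdx n) ℂ) :=
        Finset.prod_ne_zero_iff.2 fun i _ => MvPolynomial.X_ne_zero _
      exact (sub_eq_zero.1 ((mul_eq_zero.1 hz).resolve_right hq))
    -- Step 2: aeval (dsub n) f lies in the adjoin
    rw [key]
    have hmem : MvPolynomial.aeval (dsub n) f ∈ (MvPolynomial.aeval (dsub n)).range :=
      ⟨f, rfl⟩
    rw [← Algebra.adjoin_range_eq_range_aeval] at hmem
    refine Algebra.adjoin_le ?_ hmem
    rintro p ⟨s, rfl⟩
    simp only [dsub]
    split_ifs with h
    · exact Algebra.subset_adjoin ⟨s.1.1, rfl⟩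
    · exact Subalgebra.zero_mem _
  · intro hf u₁ u₂ X hu₁ hu₂ hX
    induction hf using Algebra.adjoin_induction with
    | mem p hp =>
        obtain ⟨i, rfl⟩ := hp
        simp only [MvPolynomial.eval_X]
        exact key_diag hu₁ hu₂ hX i
    | algebraMap c => simp [MvPolynomial.algebraMap_eq]
    | add p q _ _ hp hq => simp [hp, hq]
    | mul p q _ _ hp hq => simp [hp, hq]

theorem A1_unipotent_invariants
    (n : ℕ) (hn : 1 ≤ n) :
    (∀ f : MvPolynomial (UIdx n) ℂ,
      (∀ u₁ u₂ X : Matrix (Fin n) (Fin n) ℂ,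
        Unip n u₁ → Unip n u₂ → UT n X →
        MvPolynomial.eval (fun s => (u₁ * X * u₂⁻¹) s.1.1 s.1.2) f =
        MvPolynomial.eval (fun s => X s.1.1 s.1.2) f) ↔
      f ∈ Algebra.adjoin ℂ
        {p : MvPolynomial (UIdx n) ℂ | ∃ i : Fin n, p = MvPolynomial.X ⟨(i, i), le_rfl⟩}) ∧
    Nonempty (invSubA1 n ≃ₐ[ℂ] MvPolynomial (Fin n) ℂ) := by
  constructor
  · exact main_iff n
  · set g : Fin n → UIdx n := fun i => ⟨(i, i), le_rfl⟩ with hg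
    set F : MvPolynomial (Fin n) ℂ →ₐ[ℂ] MvPolynomial (UIdx n) ℂ :=
      MvPolynomial.rename g with hF
    have hginj : Function.Injective g := by
      intro a b h
      simpa using congrArg (fun s : UIdx n => s.1.1) h
    have hFinj : Function.Injective F := MvPolynomial.rename_injective g hginj
    have hSet : {p : MvPolynomial (UIdx n) ℂ | ∃ i : Fin n, p = MvPolynomial.X ⟨(i, i), le_rfl⟩}
        = Set.range (fun i : Fin n => MvPolynomial.X (g i)) := by
      ext p
      exact ⟨fun ⟨i, h⟩ => ⟨i, h.symm⟩, fun ⟨i, h⟩ => ⟨i, h.symm⟩⟩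
    have hEq : invSubA1 n = F.range := by
      have h1 : invSubA1 n = Algebra.adjoin ℂ
          {p : MvPolynomial (UIdx n) ℂ | ∃ i : Fin n, p = MvPolynomial.X ⟨(i, i), le_rfl⟩} :=
        SetLike.ext fun f => main_iff n f
      rw [h1, hSet, Algebra.adjoin_range_eq_range_aeval]
      have hA : (MvPolynomial.aeval fun i => MvPolynomial.X (g i)) = F :=
        MvPolynomial.algHom_ext fun i => by simp [hF]
      rw [hA]
    exact ⟨(Subalgebra.equivOfEq _ _ hEq).trans (AlgEquiv.ofInjective F hFinj).symm⟩
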